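/- There is a universal constant c > 0 such that for all integers n ≥ 2, r ≥ 1 and every a ∈ {0,1}^n, there exists a deterministic adaptive membership-query algorithm with point-valued output and query budget ⌈c·r·log₂ n⌉ with the following property: for every monotone function f : {0,1}^n → {0,1} such that f(a) = 1 and every minterm of f has weight at most r, the output of the algorithm on the transcript of f is a minterm b of f with b ≤ a. -/

import Mathlib

/-- The transcript of a deterministic adaptive membership-query algorithm with query map `σ`
run on target `f` for `m` queries: the list `(b₁, …, b_m)` with `b_i = f (σ (b₁, …, b_{i-1}))`. -/
def transcript {n : ℕ} (σ : List Bool → (Fin n → Bool)) (f : (Fin n → Bool) → Bool) :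
    ℕ → List Bool
  | 0 => []
  | m + 1 => transcript σ f m ++ [f (σ (transcript σ f m))]

/-- A Boolean function is monotone if it is monotone w.r.t. the coordinatewise order. -/
def MonotoneBool {n : ℕ} (f : (Fin n → Bool) → Bool) : Prop :=
  ∀ a b : Fin n → Bool, (∀ i, a i ≤ b i) → f a ≤ f b

/-- A minterm of a monotone Boolean function: a minimal assignment on which `f` is `1`. -/
def IsMinterm {n : ℕ} (f : (Fin n → Bool) → Bool) (a : Fin n → Bool) : Prop :=
  f a = true ∧ ∀ b : Fin n → Bool, (∀ i, b i ≤ a i) → f b = true → b = a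

/-- The weight of an assignment: the number of coordinates equal to `1`. -/
def weight {n : ℕ} (a : Fin n → Bool) : ℕ :=
  (Finset.univ.filter fun i => a i = true).card

namespace FTQC

variable {n : ℕ}

def pt (A : Finset (Fin n)) : Fin n → Bool := fun i => decide (i ∈ A)

lemma pt_mem {A : Finset (Fin n)} {i : Fin n} : pt A i = true ↔ i ∈ A := by simp [pt]

lemma le_pt_iff {A : Finset (Fin n)} {b : Fin n → Bool} :
    (∀ i, b i ≤ pt A i) ↔ ∀ i, b i = true → i ∈ A := by
  constructor
  · intro h i hi
    exact pt_mem.mp (Bool.le_iff_imp.mp (h i) hi)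
  · intro h i
    rw [Bool.le_iff_imp]
    intro hi
    exact pt_mem.mpr (h i hi)

lemma le_pt_mono {A B : Finset (Fin n)} (h : A ⊆ B) {b : Fin n → Bool}
    (hb : ∀ i, b i ≤ pt A i) : ∀ i, b i ≤ pt B i :=
  le_pt_iff.mpr fun i hi => h (le_pt_iff.mp hb i hi)

lemma pt_le_pt {A B : Finset (Fin n)} (h : A ⊆ B) : ∀ i, pt A i ≤ pt B i :=
  le_pt_mono h (fun _ => le_rfl)

lemma weight_lt {c b : Fin n → Bool} (h : ∀ i, c i ≤ b i) (hne : c ≠ b) :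
    weight c < weight b := by
  apply Finset.card_lt_card
  constructor
  · intro i hi
    simp only [Finset.mem_filter, Finset.mem_univ, true_and] at *
    exact Bool.le_iff_imp.mp (h i) hi
  · intro hsub
    apply hne
    funext i
    have h1 := h i
    by_cases hb : b i = true
    · have : i ∈ Finset.univ.filter fun j => c j = true := hsub (by simp [hb])
      simp only [Finset.mem_filter] at this
      rw [this.2, hb]
    · simp only [Bool.not_eq_true] at hb
      rw [hb] at h1 ⊢
      exact le_antisymm h1 (Bool.false_le _)

lemma exists_minterm (f : (Fin n → Bool) → Bool) :
    ∀ (w : ℕ) (b : Fin n → Bool), weight b ≤ w → f b = true →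
      ∃ m, IsMinterm f m ∧ ∀ i, m i ≤ b i := by
  intro w
  induction w with
  | zero =>
    intro b hb hf
    refine ⟨b, ⟨hf, fun c hc hfc => ?_⟩, fun i => le_rfl⟩
    by_contra hne
    exact absurd (weight_lt hc hne) (by omega)
  | succ w ih =>
    intro b hb hf
    by_cases H : ∀ c : Fin n → Bool, (∀ i, c i ≤ b i) → f c = true → c = b
    · exact ⟨b, ⟨hf, H⟩, fun i => le_rfl⟩
    · push_neg at H
      obtain ⟨c, hc, hfc, hne⟩ := H
      have hlt : weight c < weight b := weight_lt hc hne
      obtain ⟨m, hm, hmc⟩ := ih c (by omega) hfc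
      exact ⟨m, hm, fun i => (hmc i).trans (hc i)⟩

/-! ### The state machine -/

inductive St (n : ℕ) : Type
  | check (F : Finset (Fin n)) (I : List (Fin n)) : St n
  | search (F : Finset (Fin n)) (I : List (Fin n)) (lo hi : ℕ) : St n
  | done (F : Finset (Fin n)) : St n

def Sset (F : Finset (Fin n)) (I : List (Fin n)) (j : ℕ) : Finset (Fin n) :=
  F ∪ (I.take j).toFinset

lemma Sset_zero (F : Finset (Fin n)) (I : List (Fin n)) : Sset F I 0 = F := by
  simp [Sset]

lemma Sset_length (F : Finset (Fin n)) (I : List (Fin n)) :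
    Sset F I I.length = F ∪ I.toFinset := by simp [Sset]

lemma Sset_mono (F : Finset (Fin n)) (I : List (Fin n)) {j k : ℕ} (h : j ≤ k) :
    Sset F I j ⊆ Sset F I k := by
  apply Finset.union_subset_union_right
  intro i hi
  simp only [List.mem_toFinset] at *
  have : I.take j = (I.take k).take j := by rw [List.take_take, Nat.min_eq_left h]
  rw [this] at hi
  exact List.take_subset _ _ hi

lemma Sset_succ (F : Finset (Fin n)) (I : List (Fin n)) (i0 : Fin n) {j : ℕ}
    (hj : j < I.length) :
    Sset F I (j + 1) = insert (I.getD j i0) (Sset F I j) := by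
  rw [List.getD_eq_getElem _ _ hj]
  unfold Sset
  rw [List.take_succ, List.getElem?_eq_getElem hj]
  ext x
  simp only [Finset.mem_union, List.mem_toFinset, List.mem_append, Finset.mem_insert,
    Option.toList_some, List.mem_singleton]
  tauto

def resolve (i0 : Fin n) (F : Finset (Fin n)) (I : List (Fin n)) (lo hi : ℕ) : St n :=
  if hi ≤ lo + 1 then .check (insert (I.getD lo i0) F) (I.take lo) else .search F I lo hi

def queryOf (a : Fin n → Bool) : St n → (Fin n → Bool)
  | .check F _ => pt F
  | .search F I lo hi => pt (Sset F I ((lo + hi) / 2))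
  | .done _ => a

def outOf : St n → (Fin n → Bool)
  | .check F _ => pt F
  | .search F _ _ _ => pt F
  | .done F => pt F

def step (i0 : Fin n) : St n → Bool → St n
  | .check F _, true => .done F
  | .check F I, false => resolve i0 F I 0 I.length
  | .search F I lo hi, b =>
      if b then resolve i0 F I lo ((lo + hi) / 2) else resolve i0 F I ((lo + hi) / 2) hi
  | .done F, _ => .done F

def SuppA (a : Fin n → Bool) : Finset (Fin n) := Finset.univ.filter fun i => a i = true

def mea (r L : ℕ) : St n → ℕ
  | .check F _ => (r - F.card) * (L + 1) + 1
  | .search F _ lo hi => (r - F.card - 1) * (L + 1) + Nat.clog 2 (hi - lo) + 1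
  | .done _ => 0

def Inv (f : (Fin n → Bool) → Bool) (a : Fin n → Bool) (r : ℕ) : St n → Prop
  | .check F I =>
      f (pt (F ∪ I.toFinset)) = true ∧
      F ∪ I.toFinset ⊆ SuppA a ∧
      (∀ b : Fin n → Bool, (∀ i, b i ≤ pt (F ∪ I.toFinset) i) → f b = true →
        ∀ i ∈ F, b i = true) ∧
      I.Nodup ∧ (∀ i ∈ I, i ∉ F)
  | .search F I lo hi =>
      f (pt (Sset F I lo)) = false ∧
      f (pt (Sset F I hi)) = true ∧
      F ∪ I.toFinset ⊆ SuppA a ∧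
      (∀ b : Fin n → Bool, (∀ i, b i ≤ pt (Sset F I hi) i) → f b = true →
        ∀ i ∈ F, b i = true) ∧
      I.Nodup ∧ (∀ i ∈ I, i ∉ F) ∧ lo + 2 ≤ hi ∧ hi ≤ I.length ∧ F.card < r
  | .done F => IsMinterm f (pt F) ∧ ∀ i ∈ F, a i = true


lemma resolve_inv (f : (Fin n → Bool) → Bool) (a : Fin n → Bool) (r L : ℕ)
    (hmono : MonotoneBool f) (i0 : Fin n) (F : Finset (Fin n)) (I : List (Fin n))
    (lo hi : ℕ)
    (h0 : f (pt (Sset F I lo)) = false)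
    (h1 : f (pt (Sset F I hi)) = true)
    (hlh : lo < hi) (hlen : hi ≤ I.length)
    (hsub : F ∪ I.toFinset ⊆ SuppA a)
    (hmint : ∀ b : Fin n → Bool, (∀ i, b i ≤ pt (Sset F I hi) i) → f b = true →
      ∀ i ∈ F, b i = true)
    (hnd : I.Nodup) (hdisj : ∀ i ∈ I, i ∉ F) (hcard : F.card < r) :
    Inv f a r (resolve i0 F I lo hi) ∧
      mea r L (resolve i0 F I lo hi) ≤ (r - F.card - 1) * (L + 1) + Nat.clog 2 (hi - lo) + 1 := by
  unfold resolve
  by_cases hcase : hi ≤ lo + 1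
  · -- hi = lo + 1 : move to a check state with the critical coordinate fixed
    have hhi : hi = lo + 1 := by omega
    have hlo : lo < I.length := by omega
    rw [if_pos hcase]
    set x := I.getD lo i0 with hx
    have hxm : x ∈ I := by
      rw [hx, List.getD_eq_getElem _ _ hlo]
      exact List.getElem_mem _
    have hSucc : Sset F I hi = insert x (Sset F I lo) := by
      rw [hhi]; exact Sset_succ F I i0 hlo
    have hxF : x ∉ F := hdisj x hxm
    have hset : insert x F ∪ (I.take lo).toFinset = Sset F I hi := by
      rw [hSucc]
      ext y
      simp only [Finset.mem_union, Finset.mem_insert, List.mem_toFinset, Sset]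
      tauto
    have hndtake : (I.take (lo + 1)).Nodup := (List.take_sublist _ _).nodup hnd
    have hxtake : x ∉ I.take lo := by
      intro hmem
      rw [List.take_succ, List.getElem?_eq_getElem hlo] at hndtake
      simp only [Option.toList_some, List.nodup_append, List.nodup_singleton] at hndtake
      have h2 : x ∉ [I[lo]'hlo] := fun hm => hndtake.2.2 x hmem x hm rfl
      apply h2
      rw [hx, List.getD_eq_getElem _ _ hlo]
      exact List.mem_singleton_self _
    refine ⟨⟨?_, ?_, ?_, ?_, ?_⟩, ?_⟩
    · rw [hset]; exact h1
    · apply Finset.union_subset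
      · exact (Finset.insert_subset_iff.mpr ⟨Finset.mem_union_right _
          (List.mem_toFinset.mpr hxm), Finset.subset_union_left⟩).trans hsub
      · intro y hy
        apply hsub
        apply Finset.mem_union_right
        simp only [List.mem_toFinset] at *
        exact List.take_subset _ _ hy
    · intro b hb hfb i hi'
      rw [hset] at hb
      rcases Finset.mem_insert.mp hi' with hix | hiF
      · subst hix
        by_contra hbx
        simp only [Bool.not_eq_true] at hbx
        have hble : ∀ j, b j ≤ pt (Sset F I lo) j := by
          rw [le_pt_iff] at hb ⊢
          intro j hj
          have := hb j hj
          rw [hSucc] at this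
          rcases Finset.mem_insert.mp this with h | h
          · exact absurd (h ▸ hj) (by simp [hbx])
          · exact h
        have := hmono b _ hble
        rw [hfb, h0] at this
        exact absurd this (by simp)
      · exact hmint b hb hfb i hiF
    · exact (List.take_sublist _ _).nodup hnd
    · intro i hi'
      simp only [Finset.mem_insert, not_or]
      exact ⟨fun h => hxtake (h ▸ hi'), hdisj i (List.take_subset _ _ hi')⟩
    · simp only [mea]
      rw [Finset.card_insert_of_notMem hxF]
      have : r - (F.card + 1) = r - F.card - 1 := by omega
      rw [this]
      omega
  · rw [if_neg hcase]
    exact ⟨⟨h0, h1, hsub, hmint, hnd, hdisj, by omega, hlen, hcard⟩, le_rfl⟩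

lemma length_le_n (I : List (Fin n)) (hnd : I.Nodup) : I.length ≤ n := by
  rw [← List.toFinset_card_of_nodup hnd]
  exact (Finset.card_le_univ _).trans (by simp)

lemma step_inv (f : (Fin n → Bool) → Bool) (a : Fin n → Bool) (r : ℕ)
    (hmono : MonotoneBool f) (hwr : ∀ x : Fin n → Bool, IsMinterm f x → weight x ≤ r)
    (i0 : Fin n) (s : St n) (hs : Inv f a r s) (hnotdone : ∀ F, s ≠ .done F) :
    Inv f a r (step i0 s (f (queryOf a s))) ∧
      mea r (Nat.clog 2 n) (step i0 s (f (queryOf a s))) < mea r (Nat.clog 2 n) s := by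
  set L := Nat.clog 2 n with hL
  cases s with
  | done F => exact absurd rfl (hnotdone F)
  | check F I =>
    obtain ⟨hf1, hsub, hmint, hInd, hdisj⟩ := hs
    have hquery : queryOf a (.check F I : St n) = pt F := rfl
    rw [hquery]
    cases hq : f (pt F) with
    | true =>
      have hstep : step i0 (.check F I : St n) true = .done F := rfl
      rw [hstep]
      constructor
      · refine ⟨⟨hq, ?_⟩, ?_⟩
        · intro b hb hfb
          have hb' : ∀ i, b i ≤ pt (F ∪ I.toFinset) i :=
            le_pt_mono Finset.subset_union_left hb
          have hbF := hmint b hb' hfb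
          funext i
          by_cases hiF : i ∈ F
          · rw [hbF i hiF]; simp [pt, hiF]
          · have hptf : pt F i = false := by simp [pt, hiF]
            have h3 := hb i
            rw [hptf] at h3 ⊢
            exact le_antisymm h3 (Bool.false_le _)
        · intro i hiF
          have := hsub (Finset.mem_union_left _ hiF)
          simpa [SuppA] using this
      · show (0 : ℕ) < (r - F.card) * (L + 1) + 1
        exact Nat.succ_pos _
    | false =>
      have hstep : step i0 (.check F I : St n) false = resolve i0 F I 0 I.length := rfl
      rw [hstep]
      -- F.card < r
      obtain ⟨mb, hmb, hmble⟩ := exists_minterm f (weight (pt (F ∪ I.toFinset))) _ le_rfl hf1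
      have hFsub : F ⊆ Finset.univ.filter fun i => mb i = true := by
        intro i hiF
        simp only [Finset.mem_filter, Finset.mem_univ, true_and]
        exact hmint mb hmble hmb.1 i hiF
      have hFcard : F.card ≤ weight mb := Finset.card_le_card hFsub
      have hne : F.card ≠ weight mb := by
        intro heq
        have hFeq : F = Finset.univ.filter fun i => mb i = true :=
          Finset.eq_of_subset_of_card_le hFsub (le_of_eq heq.symm)
        have hmbpt : mb = pt F := by
          funext i
          by_cases hmbi : mb i = true
          · have hiF : i ∈ F := by rw [hFeq]; simp [hmbi]
            rw [hmbi]; simp [pt, hiF]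
          · have hiF : i ∉ F := by rw [hFeq]; simp [hmbi]
            simp only [Bool.not_eq_true] at hmbi
            rw [hmbi]; simp [pt, hiF]
        rw [← hmbpt, hmb.1] at hq
        exact absurd hq (by simp)
      have hcard : F.card < r := by
        have := hwr mb hmb
        omega
      have hlen1 : 1 ≤ I.length := by
        rcases I with _ | ⟨x, I'⟩
        · simp only [List.toFinset_nil, Finset.union_empty] at hf1
          rw [hf1] at hq
          exact absurd hq (by simp)
        · simp
      have h0 : f (pt (Sset F I 0)) = false := by rw [Sset_zero]; exact hq
      have h1' : f (pt (Sset F I I.length)) = true := by rw [Sset_length]; exact hf1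
      have hres := resolve_inv f a r L hmono i0 F I 0 I.length h0 h1' hlen1 le_rfl hsub
        (by rw [Sset_length]; exact hmint) hInd hdisj hcard
      refine ⟨hres.1, lt_of_le_of_lt hres.2 ?_⟩
      show _ < (r - F.card) * (L + 1) + 1
      have hclog : Nat.clog 2 (I.length - 0) ≤ L := by
        rw [hL]
        exact Nat.clog_mono_right _ (by simpa using length_le_n I hInd)
      have hmul : (r - F.card - 1) * (L + 1) + (L + 1) = (r - F.card) * (L + 1) := by
        have h5 : r - F.card - 1 + 1 = r - F.card := by omega
        rw [← h5, Nat.succ_mul, h5]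
      rw [← hmul]
      set A := (r - F.card - 1) * (L + 1)
      set c1 := Nat.clog 2 (I.length - 0)
      omega
  | search F I lo hi =>
    obtain ⟨h0, h1, hsub, hmint, hInd, hdisj, hlohi, hlen, hcard⟩ := hs
    have hquery : queryOf a (.search F I lo hi : St n) = pt (Sset F I ((lo + hi) / 2)) := rfl
    rw [hquery]
    have hmlo : lo < (lo + hi) / 2 := by omega
    have hmhi : (lo + hi) / 2 < hi := by omega
    have hrec : Nat.clog 2 (hi - lo) = Nat.clog 2 ((hi - lo + 1) / 2) + 1 := by
      have h6 := Nat.clog_of_two_le (b := 2) (n := hi - lo) one_lt_two (by omega)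
      rw [h6]
      norm_num
    cases hq : f (pt (Sset F I ((lo + hi) / 2))) with
    | true =>
      have hstep : step i0 (.search F I lo hi : St n) true =
          resolve i0 F I lo ((lo + hi) / 2) := rfl
      rw [hstep]
      have hres := resolve_inv f a r L hmono i0 F I lo ((lo + hi) / 2) h0 hq hmlo
        (by omega) hsub
        (fun b hb hfb => hmint b (le_pt_mono (Sset_mono F I (le_of_lt hmhi)) hb) hfb)
        hInd hdisj hcard
      refine ⟨hres.1, lt_of_le_of_lt hres.2 ?_⟩
      show _ < (r - F.card - 1) * (L + 1) + Nat.clog 2 (hi - lo) + 1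
      have hm2 : Nat.clog 2 ((lo + hi) / 2 - lo) ≤ Nat.clog 2 ((hi - lo + 1) / 2) :=
        Nat.clog_mono_right _ (by omega)
      set A := (r - F.card - 1) * (L + 1)
      set c1 := Nat.clog 2 ((lo + hi) / 2 - lo)
      set c2 := Nat.clog 2 (hi - lo)
      set c3 := Nat.clog 2 ((hi - lo + 1) / 2)
      omega
    | false =>
      have hstep : step i0 (.search F I lo hi : St n) false =
          resolve i0 F I ((lo + hi) / 2) hi := rfl
      rw [hstep]
      have hres := resolve_inv f a r L hmono i0 F I ((lo + hi) / 2) hi hq h1 hmhi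
        hlen hsub hmint hInd hdisj hcard
      refine ⟨hres.1, lt_of_le_of_lt hres.2 ?_⟩
      show _ < (r - F.card - 1) * (L + 1) + Nat.clog 2 (hi - lo) + 1
      have hm2 : Nat.clog 2 (hi - (lo + hi) / 2) ≤ Nat.clog 2 ((hi - lo + 1) / 2) :=
        Nat.clog_mono_right _ (by omega)
      set A := (r - F.card - 1) * (L + 1)
      set c1 := Nat.clog 2 (hi - (lo + hi) / 2)
      set c2 := Nat.clog 2 (hi - lo)
      set c3 := Nat.clog 2 ((hi - lo + 1) / 2)
      omega


noncomputable def initSt (a : Fin n → Bool) : St n := .check ∅ (SuppA a).toList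

noncomputable def stOf (i0 : Fin n) (a : Fin n → Bool) (l : List Bool) : St n :=
  l.foldl (step i0) (initSt a)

lemma init_inv (f : (Fin n → Bool) → Bool) (a : Fin n → Bool) (r : ℕ)
    (hfa : f a = true) : Inv f a r (initSt a : St n) := by
  refine ⟨?_, ?_, ?_, Finset.nodup_toList _, ?_⟩
  · have h1 : (∅ ∪ (SuppA a).toList.toFinset : Finset (Fin n)) = SuppA a := by
      simp [Finset.toList_toFinset]
    rw [h1]
    have hpt : pt (SuppA a) = a := by
      funext i
      cases h : a i <;> simp [pt, SuppA, h]
    rw [hpt]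
    exact hfa
  · simp [Finset.toList_toFinset]
  · intro b _ _ i hi
    exact absurd hi (Finset.notMem_empty i)
  · intro i _
    exact Finset.notMem_empty i

lemma run_done (f : (Fin n → Bool) → Bool) (a : Fin n → Bool) (r : ℕ)
    (hmono : MonotoneBool f) (hfa : f a = true)
    (hwr : ∀ x : Fin n → Bool, IsMinterm f x → weight x ≤ r)
    (i0 : Fin n) (k : ℕ) (hk : r * (Nat.clog 2 n + 1) + 1 ≤ k) :
    ∃ F : Finset (Fin n),
      stOf i0 a (transcript (fun l => queryOf a (stOf i0 a l)) f k) = .done F ∧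
      IsMinterm f (pt F) ∧ ∀ i ∈ F, a i = true := by
  set L := Nat.clog 2 n with hLdef
  set σ := fun l => queryOf a (stOf i0 a l) with hσ
  set M := r * (L + 1) + 1 with hM
  have key : ∀ j, (∃ F, stOf i0 a (transcript σ f j) = .done F ∧
        Inv f a r (.done F : St n)) ∨
      (Inv f a r (stOf i0 a (transcript σ f j)) ∧
        mea r L (stOf i0 a (transcript σ f j)) + j ≤ M) := by
    intro j
    induction j with
    | zero =>
      right
      refine ⟨init_inv f a r hfa, ?_⟩
      show mea r L (initSt a) + 0 ≤ M
      have h2 : mea r L (initSt a : St n) = M := by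
        simp only [mea, initSt, Finset.card_empty, Nat.sub_zero, hM]
      omega
    | succ j ih =>
      have hrec : stOf i0 a (transcript σ f (j + 1)) =
          step i0 (stOf i0 a (transcript σ f j))
            (f (queryOf a (stOf i0 a (transcript σ f j)))) := by
        show stOf i0 a (transcript σ f j ++ [f (σ (transcript σ f j))]) = _
        rw [hσ]
        simp [stOf, List.foldl_append]
      rcases ih with ⟨F, hF, hinv⟩ | ⟨hinv, hmea⟩
      · left
        exact ⟨F, by rw [hrec, hF]; rfl, hinv⟩
      · by_cases hdone : ∃ F, stOf i0 a (transcript σ f j) = .done F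
        · obtain ⟨F, hF⟩ := hdone
          left
          exact ⟨F, by rw [hrec, hF]; rfl, hF ▸ hinv⟩
        · push_neg at hdone
          have hstep := step_inv f a r hmono hwr i0 _ hinv (fun F => hdone F)
          right
          rw [hrec]
          refine ⟨hstep.1, ?_⟩
          have h2 := hstep.2
          set m1 := mea r L (step i0 (stOf i0 a (transcript σ f j))
            (f (queryOf a (stOf i0 a (transcript σ f j))))) with hm1
          set m0 := mea r L (stOf i0 a (transcript σ f j)) with hm0
          omega
  rcases key k with ⟨F, hF, hinv⟩ | ⟨hinv, hmea⟩
  · exact ⟨F, hF, hinv.1, hinv.2⟩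
  · cases hstate : stOf i0 a (transcript σ f k) with
    | done F =>
      rw [hstate] at hinv
      exact ⟨F, rfl, hinv.1, hinv.2⟩
    | check F I =>
      exfalso
      rw [hstate] at hmea
      have hpos : 1 ≤ mea r L (.check F I : St n) := Nat.le_add_left 1 _
      have h3 := le_trans (Nat.add_le_add_right hpos k) hmea
      omega
    | search F I lo hi =>
      exfalso
      rw [hstate] at hmea
      have hpos : 1 ≤ mea r L (.search F I lo hi : St n) := Nat.le_add_left 1 _
      have h3 := le_trans (Nat.add_le_add_right hpos k) hmea
      omega

end FTQC

/-- There is a universal constant `c > 0` such that for all `n ≥ 2`, `r ≥ 1` and every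
`a ∈ {0,1}^n`, some deterministic adaptive membership-query algorithm with point-valued
output and query budget `⌈c·r·log₂ n⌉` outputs, for every monotone target `f` with
`f a = 1` whose minterms all have weight at most `r`, a minterm `b` of `f` with `b ≤ a`. -/

theorem find_term_query_complexity :
    ∃ c : ℝ, 0 < c ∧ ∀ (n r : ℕ), 2 ≤ n → 1 ≤ r → ∀ a : Fin n → Bool,
      ∃ (σ : List Bool → (Fin n → Bool)) (out : List Bool → (Fin n → Bool)),
        ∀ f : (Fin n → Bool) → Bool,
          MonotoneBool f → f a = true →
          (∀ x : Fin n → Bool, IsMinterm f x → weight x ≤ r) →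
          IsMinterm f (out (transcript σ f ⌈c * r * Real.logb 2 n⌉₊)) ∧
            ∀ i, out (transcript σ f ⌈c * r * Real.logb 2 n⌉₊) i ≤ a i := by
  refine ⟨4, by norm_num, ?_⟩
  intro n r hn hr a
  have hn0 : 0 < n := by omega
  refine ⟨fun l => FTQC.queryOf a (FTQC.stOf ⟨0, hn0⟩ a l),
    fun l => FTQC.outOf (FTQC.stOf ⟨0, hn0⟩ a l), ?_⟩
  intro f hmono hfa hwr
  set m := ⌈(4 : ℝ) * r * Real.logb 2 n⌉₊ with hm
  have hL1 : 1 ≤ Nat.clog 2 n := Nat.clog_pos one_lt_two hn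
  have hlogb1 : (1 : ℝ) ≤ Real.logb 2 n := by
    have := Real.logb_self_eq_one (b := (2:ℝ)) (by norm_num)
    rw [← this]
    exact Real.logb_le_logb_of_le one_lt_two (by norm_num) (by exact_mod_cast hn)
  have hLle : (Nat.clog 2 n : ℝ) ≤ Real.logb 2 n + 1 := by
    have h2 : (2 : ℕ) ^ (Nat.clog 2 n - 1) < n := Nat.pow_pred_clog_lt_self one_lt_two hn
    have h3 : ((2 : ℝ)) ^ (Nat.clog 2 n - 1) ≤ (n : ℝ) := by exact_mod_cast le_of_lt h2
    have h4 : ((Nat.clog 2 n - 1 : ℕ) : ℝ) ≤ Real.logb 2 n := by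
      calc ((Nat.clog 2 n - 1 : ℕ) : ℝ)
          = Real.logb 2 ((2 : ℝ) ^ (Nat.clog 2 n - 1)) := by
            rw [Real.logb_pow, Real.logb_self_eq_one (b := (2:ℝ)) (by norm_num), mul_one]
        _ ≤ Real.logb 2 n :=
            Real.logb_le_logb_of_le one_lt_two (by positivity) h3
    have h5 : ((Nat.clog 2 n - 1 : ℕ) : ℝ) = (Nat.clog 2 n : ℝ) - 1 := by
      push_cast [Nat.cast_sub hL1]
      ring
    linarith [h4, h5 ▸ h4]
  have hMm : r * (Nat.clog 2 n + 1) + 1 ≤ m := by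
    have hrr : (1 : ℝ) ≤ (r : ℝ) := by exact_mod_cast hr
    have hreal : ((r * (Nat.clog 2 n + 1) + 1 : ℕ) : ℝ) ≤ (4 : ℝ) * r * Real.logb 2 n := by
      push_cast
      nlinarith [mul_le_mul_of_nonneg_left hLle (by linarith : (0 : ℝ) ≤ (r : ℝ)),
        mul_le_mul_of_nonneg_left hlogb1 (by linarith : (0 : ℝ) ≤ (r : ℝ))]
    have h9 := le_trans hreal (Nat.le_ceil ((4 : ℝ) * r * Real.logb 2 n))
    rw [hm]
    exact_mod_cast h9
  obtain ⟨F, hF, hmin, hFa⟩ := FTQC.run_done f a r hmono hfa hwr ⟨0, hn0⟩ m hMm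
  constructor
  · show IsMinterm f (FTQC.outOf (FTQC.stOf ⟨0, hn0⟩ a (transcript _ f m)))
    rw [hF]
    exact hmin
  · intro i
    show FTQC.outOf (FTQC.stOf ⟨0, hn0⟩ a (transcript _ f m)) i ≤ a i
    rw [hF]
    show FTQC.pt F i ≤ a i
    rw [Bool.le_iff_imp]
    intro hi
    exact hFa i (FTQC.pt_mem.mp hi)
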